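/- Both inclusions of Proposition 1 can be strict: (i) there exist a type U, a monotone Boolean query Q with ¬Q(∅), a partitioned instance D = Dⁿ ∪ Dˣ, and a tuple t ∉ D such that CS(Dⁿ, Dˣ, Q) ⊊ CS(Dⁿ ∪ {t}, Dˣ, Q); and (ii) there exist such data with CS(Dⁿ, Dˣ ∪ {t}, Q) ⊊ CS(Dⁿ, Dˣ, Q). -/
import Mathlib


/-- `t` is an actual cause for query `Q` in instance `D` with endogenous part `Dn`. -/
def IsCause {U : Type*} [DecidableEq U] (D Dn : Finset U) (Q : Finset U → Prop) (t : U) : Prop :=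
  t ∈ Dn ∧ ∃ Γ ⊆ Dn, t ∉ Γ ∧ Q (D \ Γ) ∧ ¬ Q (D \ insert t Γ)

/-- Both inclusions of Proposition 1 can be strict. -/
theorem causes_inclusions_can_be_strict :
    (∃ (U : Type) (_ : DecidableEq U) (Q : Finset U → Prop) (Dn Dx : Finset U) (t : U),
      (∀ S S' : Finset U, S ⊆ S' → Q S → Q S') ∧ ¬ Q ∅ ∧
      Disjoint Dn Dx ∧ t ∉ Dn ∪ Dx ∧
      {u | IsCause (Dn ∪ Dx) Dn Q u} ⊂ {u | IsCause (insert t Dn ∪ Dx) (insert t Dn) Q u}) ∧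
    (∃ (U : Type) (_ : DecidableEq U) (Q : Finset U → Prop) (Dn Dx : Finset U) (t : U),
      (∀ S S' : Finset U, S ⊆ S' → Q S → Q S') ∧ ¬ Q ∅ ∧
      Disjoint Dn Dx ∧ t ∉ Dn ∪ Dx ∧
      {u | IsCause (Dn ∪ insert t Dx) Dn Q u} ⊂ {u | IsCause (Dn ∪ Dx) Dn Q u}) := by
  constructor
  · refine ⟨ℕ, inferInstance, fun S => 0 ∈ S, ∅, ∅, 0, ?_, ?_, ?_, ?_, ?_⟩
    · exact fun S S' h hS => h hS
    · simp
    · simp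
    · simp
    · rw [Set.ssubset_def]
      constructor
      · intro u hu
        exact absurd hu.1 (Finset.notMem_empty u)
      · intro h
        have h0 : (0 : ℕ) ∈ {u | IsCause (insert 0 ∅ ∪ ∅) (insert 0 ∅) (fun S => 0 ∈ S) u} := by
          refine ⟨by simp, ∅, by simp, by simp, by simp, by simp⟩
        have := h h0
        exact absurd this.1 (Finset.notMem_empty 0)
  · refine ⟨ℕ, inferInstance, fun S => 0 ∈ S ∨ 1 ∈ S, {0}, ∅, 1, ?_, ?_, ?_, ?_, ?_⟩
    · rintro S S' h (hS | hS)
      · exact Or.inl (h hS)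
      · exact Or.inr (h hS)
    · simp
    · simp
    · simp
    · rw [Set.ssubset_def]
      constructor
      · rintro u ⟨hu, Γ, hΓ, htΓ, hQ, hnQ⟩
        exact absurd (Or.inr (by
          simp only [Finset.mem_sdiff, Finset.mem_union, Finset.mem_insert]
          refine ⟨Or.inr (by simp), ?_⟩
          intro h
          rcases h with h | h
          · have := Finset.mem_singleton.mp hu
            omega
          · have := Finset.mem_singleton.mp (hΓ h)
            omega)) hnQ
      · intro h
        have h0 : (0 : ℕ) ∈ {u | IsCause ({0} ∪ ∅) {0} (fun S => 0 ∈ S ∨ 1 ∈ S) u} := by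
          refine ⟨by simp, ∅, by simp, by simp, Or.inl (by simp), by simp⟩
        have := h h0
        obtain ⟨_, Γ, hΓ, htΓ, hQ, hnQ⟩ := this
        exact hnQ (Or.inr (by
          simp only [Finset.mem_sdiff, Finset.mem_union, Finset.mem_insert]
          refine ⟨Or.inr (by simp), ?_⟩
          intro h'
          rcases h' with h' | h'
          · omega
          · have := Finset.mem_singleton.mp (hΓ h')
            omega))
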